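/- arXiv:1211.2359 — 4 statements merged into one kernel-verified Lean document; each statement's English description precedes it below -/
import Mathlib

section
/- Suppose shifts s₁ ≤ s₃ ≤ s₂ are such that for every example i, e_i + s₁ > 0 if and only if e_i + s₂ > 0 (the set of over-estimated examples is the same under both shifts). Then for every i, e_i + s₃ > 0 iff e_i + s₁ > 0, and the three points (OVER(s), UNDER(s)) for s ∈ {s₁, s₂, s₃} are collinear, where OVER(s) = ∑_{i : e_i + s > 0} (e_i + s) and UNDER(s) = ∑_{i : e_i + s ≤ 0} (e_i + s). -/
open Finset

/-- Total over-estimation for error vector `e` with constant shift `s`. -/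
noncomputable def OVER {n : ℕ} (e : Fin n → ℝ) (s : ℝ) : ℝ :=
  ∑ i ∈ univ.filter (fun i => 0 < e i + s), (e i + s)

/-- Total under-estimation for error vector `e` with constant shift `s`. -/
noncomputable def UNDER {n : ℕ} (e : Fin n → ℝ) (s : ℝ) : ℝ :=
  ∑ i ∈ univ.filter (fun i => e i + s ≤ 0), (e i + s)

theorem shifts_collinear (n : ℕ) (e : Fin n → ℝ) (s₁ s₂ s₃ : ℝ)
    (h13 : s₁ ≤ s₃) (h32 : s₃ ≤ s₂)
    (hsame : ∀ i, 0 < e i + s₁ ↔ 0 < e i + s₂) :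
    (∀ i, (0 < e i + s₃ ↔ 0 < e i + s₁)) ∧
    (OVER e s₂ - OVER e s₁) * (UNDER e s₃ - UNDER e s₁) =
      (OVER e s₃ - OVER e s₁) * (UNDER e s₂ - UNDER e s₁) := by
  have key : ∀ i, (0 < e i + s₃ ↔ 0 < e i + s₁) := by
    intro i
    constructor
    · intro h
      exact (hsame i).mpr (lt_of_lt_of_le h (by linarith))
    · intro h
      linarith
  refine ⟨key, ?_⟩
  have key2 : ∀ i, (e i + s₃ ≤ 0 ↔ e i + s₁ ≤ 0) := by
    intro i
    rw [← not_lt, ← not_lt, key i]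
  have hs2 : ∀ i, (e i + s₂ ≤ 0 ↔ e i + s₁ ≤ 0) := by
    intro i
    rw [← not_lt, ← not_lt, hsame i]
  -- filter sets
  set A := univ.filter (fun i => 0 < e i + s₁) with hA
  set B := univ.filter (fun i => e i + s₁ ≤ 0) with hB
  have hA3 : univ.filter (fun i => 0 < e i + s₃) = A := by
    apply filter_congr; intro i _; simp [key i]
  have hA2 : univ.filter (fun i => 0 < e i + s₂) = A := by
    apply filter_congr; intro i _; simp [(hsame i).symm]
  have hB3 : univ.filter (fun i => e i + s₃ ≤ 0) = B := by
    apply filter_congr; intro i _; simp [key2 i]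
  have hB2 : univ.filter (fun i => e i + s₂ ≤ 0) = B := by
    apply filter_congr; intro i _; simp [hs2 i]
  have hO : ∀ s : ℝ, ∀ h : univ.filter (fun i => 0 < e i + s) = A,
      OVER e s = (∑ i ∈ A, e i) + A.card * s := by
    intro s h
    rw [OVER, h, Finset.sum_add_distrib, Finset.sum_const, nsmul_eq_mul]
  have hU : ∀ s : ℝ, ∀ h : univ.filter (fun i => e i + s ≤ 0) = B,
      UNDER e s = (∑ i ∈ B, e i) + B.card * s := by
    intro s h
    rw [UNDER, h, Finset.sum_add_distrib, Finset.sum_const, nsmul_eq_mul]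
  rw [hO s₁ rfl, hO s₂ hA2, hO s₃ hA3, hU s₁ rfl, hU s₂ hB2, hU s₃ hB3]
  ring
end

section
/- Let e : Fin n → ℝ be sorted in decreasing order (e_1 ≥ e_2 ≥ ... ≥ e_n) with differences d_i = e_i - e_{i+1} for i = 1, ..., n-1. Define points p_i = (o_i, u_i) where o_i = ∑_{j=1}^{i-1} j·d_j and u_i = -∑_{j=i}^{n-1} (n-j)·d_j. Then the area over the RROC curve, AOC = -∑_{i=1}^{n-1} ((u_i + u_{i+1})/2)·(o_{i+1} - o_i), equals σ²·n²/2, where σ² = (∑ e_i²)/n - μ² is the population variance of e and μ = (∑ e_i)/n. -/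
open Finset

/-- Telescoping sum of differences. -/
lemma tel_sum (e : ℕ → ℝ) (i : ℕ) : ∀ n, i ≤ n →
    ∑ j ∈ Ico i n, (e j - e (j + 1)) = e i - e n := by
  refine Nat.le_induction ?_ ?_
  · simp
  · intro n hn ih
    rw [Finset.sum_Ico_succ_top hn, ih]; ring

/-- Closed form for the `u` values. -/
lemma u_closed (e : ℕ → ℝ) (i : ℕ) : ∀ n, i ≤ n →
    -∑ j ∈ Ico i n, ((n : ℝ) - j) * (e j - e (j + 1))
      = (∑ j ∈ Ico (i + 1) (n + 1), e j) - ((n : ℝ) - i) * e i := by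
  refine Nat.le_induction ?_ ?_
  · simp
  · intro n hn ih
    have tel := tel_sum e i n hn
    have split : ∑ j ∈ Ico i (n + 1), ((↑(n + 1) : ℝ) - j) * (e j - e (j + 1))
        = (∑ j ∈ Ico i n, ((n : ℝ) - j) * (e j - e (j + 1)))
          + (∑ j ∈ Ico i n, (e j - e (j + 1))) + (e n - e (n + 1)) := by
      rw [Finset.sum_Ico_succ_top hn, ← Finset.sum_add_distrib]
      push_cast
      congr 1
      · apply Finset.sum_congr rfl; intro j _; ring
      · ring
    have splitR : ∑ j ∈ Ico (i + 1) (n + 1 + 1), e j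
        = (∑ j ∈ Ico (i + 1) (n + 1), e j) + e (n + 1) :=
      Finset.sum_Ico_succ_top (by omega) e
    rw [split, splitR]
    push_cast
    push_cast at ih
    linarith

/-- Abel summation. -/
lemma abel_sum (f : ℕ → ℝ) : ∀ n : ℕ, 1 ≤ n →
    ∑ i ∈ Ico 1 n, (i : ℝ) * (f i - f (i + 1))
      = (∑ i ∈ Ico 1 n, f i) - ((n : ℝ) - 1) * f n := by
  refine Nat.le_induction ?_ ?_
  · simp
  · intro n hn ih
    rw [Finset.sum_Ico_succ_top hn, Finset.sum_Ico_succ_top hn, ih]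
    push_cast
    ring

lemma keyE (e : ℕ → ℝ) : ∀ n : ℕ, ∀ U : ℕ → ℝ,
    (∀ i, U i = (∑ j ∈ Ico (i + 1) (n + 1), e j) - ((n : ℝ) - i) * e i) →
    -∑ i ∈ Ico 1 n, ((U i + U (i + 1)) / 2) * ((i : ℝ) * (e i - e (i + 1)))
      = ((n : ℝ) * ∑ i ∈ Icc 1 n, (e i) ^ 2 - (∑ i ∈ Icc 1 n, e i) ^ 2) / 2 := by
  intro n
  induction n with
  | zero => intro U hU; simp
  | succ n ih =>
    intro V hV
    rcases Nat.eq_zero_or_pos n with rfl | hn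
    · simp [Finset.Icc_self]
    · set U : ℕ → ℝ := fun i => (∑ j ∈ Ico (i + 1) (n + 1), e j) - ((n : ℝ) - i) * e i
        with hUdef
      have hIH := ih U (fun i => rfl)
      have hV' : ∀ i, i ≤ n → V i = U i + (e (n + 1) - e i) := by
        intro i hi
        rw [hV i, Finset.sum_Ico_succ_top (by omega : i + 1 ≤ n + 1)]
        simp only [hUdef]
        push_cast
        ring
      have hUn : U n = 0 := by
        simp [hUdef, Finset.Ico_self]
      have hVn : V n = e (n + 1) - e n := by
        rw [hV' n le_rfl, hUn]; ring
      have hVn1 : V (n + 1) = 0 := by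
        rw [hV (n + 1)]
        push_cast
        simp [Finset.Ico_self]
      have hsplit : ∑ i ∈ Ico 1 (n + 1), ((V i + V (i + 1)) / 2) * ((i : ℝ) * (e i - e (i + 1)))
          = (∑ i ∈ Ico 1 n, ((U i + U (i + 1)) / 2) * ((i : ℝ) * (e i - e (i + 1))))
            + (-(1 / 2) * ∑ i ∈ Ico 1 n,
                (i : ℝ) * ((e i - e (n + 1)) ^ 2 - (e (i + 1) - e (n + 1)) ^ 2))
            + ((V n + V (n + 1)) / 2) * ((n : ℝ) * (e n - e (n + 1))) := by
        rw [Finset.sum_Ico_succ_top (by omega : 1 ≤ n), Finset.mul_sum,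
          ← Finset.sum_add_distrib]
        congr 1
        apply Finset.sum_congr rfl
        intro i hi
        have hi2 : i < n := (Finset.mem_Ico.mp hi).2
        rw [hV' i (by omega), hV' (i + 1) (by omega)]
        ring
      have habel := abel_sum (fun i => (e i - e (n + 1)) ^ 2) n hn
      have hIcoIcc : ∑ i ∈ Icc 1 n, (e i - e (n + 1)) ^ 2
          = (∑ i ∈ Ico 1 n, (e i - e (n + 1)) ^ 2) + (e n - e (n + 1)) ^ 2 := by
        rw [← Finset.Ico_add_one_right_eq_Icc, Finset.sum_Ico_succ_top hn]
      have hfull : ∑ i ∈ Icc 1 n, (e i - e (n + 1)) ^ 2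
          = (∑ i ∈ Icc 1 n, (e i) ^ 2) - 2 * e (n + 1) * (∑ i ∈ Icc 1 n, e i)
            + (n : ℝ) * (e (n + 1)) ^ 2 := by
        have hcard : (Finset.Icc 1 n).card = n := by rw [Nat.card_Icc]; omega
        have expand : ∀ i ∈ Icc 1 n, (e i - e (n + 1)) ^ 2
            = (e i) ^ 2 - 2 * e (n + 1) * e i + (e (n + 1)) ^ 2 := fun i _ => by ring
        rw [Finset.sum_congr rfl expand, Finset.sum_add_distrib, Finset.sum_sub_distrib,
          ← Finset.mul_sum, Finset.sum_const, hcard, nsmul_eq_mul]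
      have hT : ∑ i ∈ Icc 1 (n + 1), (e i) ^ 2
          = (∑ i ∈ Icc 1 n, (e i) ^ 2) + (e (n + 1)) ^ 2 := by
        rw [← Finset.Ico_add_one_right_eq_Icc, Finset.sum_Ico_succ_top (by omega : 1 ≤ n + 1),
          Finset.Ico_add_one_right_eq_Icc]
      have hE : ∑ i ∈ Icc 1 (n + 1), e i = (∑ i ∈ Icc 1 n, e i) + e (n + 1) := by
        rw [← Finset.Ico_add_one_right_eq_Icc, Finset.sum_Ico_succ_top (by omega : 1 ≤ n + 1),
          Finset.Ico_add_one_right_eq_Icc]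
      rw [hsplit, hT, hE, hVn, hVn1, habel]
      push_cast
      push_cast at hIH
      nlinarith [hIH, hIcoIcc, hfull]

/-- The AOC of the RROC curve equals the population error variance times `n²/2`. -/
theorem aoc_eq_variance (n : ℕ) (hn : 1 ≤ n) (e d o u : ℕ → ℝ) (AOC μ σ2 : ℝ)
    (hdec : ∀ i, 1 ≤ i → i < n → e (i + 1) ≤ e i)
    (hd : ∀ j, d j = e j - e (j + 1))
    (ho : ∀ i, o i = ∑ j ∈ Finset.Ico 1 i, (j : ℝ) * d j)
    (hu : ∀ i, u i = -∑ j ∈ Finset.Ico i n, ((n : ℝ) - j) * d j)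
    (hAOC : AOC = -∑ i ∈ Finset.Ico 1 n, ((u i + u (i + 1)) / 2) * (o (i + 1) - o i))
    (hμ : μ = (∑ i ∈ Finset.Icc 1 n, e i) / n)
    (hσ : σ2 = (∑ i ∈ Finset.Icc 1 n, (e i) ^ 2) / n - μ ^ 2) :
    AOC = σ2 * (n : ℝ) ^ 2 / 2 := by
  have hn0 : (n : ℝ) ≠ 0 := by positivity
  set U : ℕ → ℝ := fun i => (∑ j ∈ Ico (i + 1) (n + 1), e j) - ((n : ℝ) - i) * e i
    with hUdef
  have hud : ∀ i, i ≤ n → u i = U i := by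
    intro i hi
    rw [hu i]
    have : ∑ j ∈ Ico i n, ((n : ℝ) - j) * d j
        = ∑ j ∈ Ico i n, ((n : ℝ) - j) * (e j - e (j + 1)) :=
      Finset.sum_congr rfl fun j _ => by rw [hd]
    rw [this, u_closed e i n hi]
  have hAOC2 : AOC = -∑ i ∈ Ico 1 n, ((U i + U (i + 1)) / 2) * ((i : ℝ) * (e i - e (i + 1))) := by
    rw [hAOC]
    congr 1
    apply Finset.sum_congr rfl
    intro i hi
    obtain ⟨hi1, hi2⟩ := Finset.mem_Ico.mp hi
    have hoo : o (i + 1) - o i = (i : ℝ) * (e i - e (i + 1)) := by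
      rw [ho (i + 1), ho i, Finset.sum_Ico_succ_top hi1, hd i]
      ring
    rw [hoo, hud i (by omega), hud (i + 1) (by omega)]
  rw [hAOC2, keyE e n U (fun i => rfl), hσ, hμ]
  field_simp
end

section
/- Two models m₁ and m₂ with RROC points (O₁, U₁) and (O₂, U₂), O₁ ≠ O₂, incur equal asymmetric loss exactly for the asymmetry α* = 1/(1 + slope), where slope = (U₂ - U₁)/(O₂ - O₁) is the slope of the segment connecting the two points (assuming slope > -1 and slope finite). That is, -2α*·U₁ + 2(1-α*)·O₁ = -2α*·U₂ + 2(1-α*)·O₂. -/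
theorem equal_loss_asymmetry (O₁ U₁ O₂ U₂ s αstar : ℝ)
    (hO₁ : 0 ≤ O₁) (hU₁ : U₁ ≤ 0) (hO₂ : 0 ≤ O₂) (hU₂ : U₂ ≤ 0)
    (hne : O₁ ≠ O₂)
    (hs : s = (U₂ - U₁) / (O₂ - O₁))
    (hsgt : -1 < s)
    (hα : αstar = 1 / (1 + s)) :
    -2 * αstar * U₁ + 2 * (1 - αstar) * O₁ = -2 * αstar * U₂ + 2 * (1 - αstar) * O₂ := by
  have hd : O₂ - O₁ ≠ 0 := sub_ne_zero.mpr (Ne.symm hne)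
  have hU : U₂ - U₁ = s * (O₂ - O₁) := by rw [hs]; field_simp
  have h1s : 1 + s ≠ 0 := by linarith
  have hα' : αstar * (1 + s) = 1 := by rw [hα]; field_simp
  nlinarith [hα', hU]
end

section
/- A hybrid model formed by choosing each prediction from model m₁ with probability p and from m₂ with probability 1-p has expected RROC point equal to the convex combination p·(O₁,U₁) + (1-p)·(O₂,U₂) of the individual points, provided for each example both models' errors have the same sign. In particular, under this same-sign assumption, every point on the segment between two RROC points is achievable in expectation. -/
open Finset

lemma hybrid_key {n : ℕ} (p : ℝ) (h : Fin n → Bool → ℝ) (i : Fin n) :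
    ∑ c : Fin n → Bool, (∏ j, (if c j then p else 1 - p)) * h i (c i)
      = p * h i true + (1 - p) * h i false := by
  have e1 : ∀ c : Fin n → Bool,
      (∏ j, (if c j then p else 1 - p)) * h i (c i)
        = ∏ j, ((if c j then p else 1 - p) * (if i = j then h i (c j) else 1)) := by
    intro c
    rw [Finset.prod_mul_distrib, Finset.prod_ite_eq]
    simp
  simp_rw [e1]
  have e2 := (Finset.prod_univ_sum (fun _ : Fin n => (univ : Finset Bool))
      (fun j b => (if b then p else 1 - p) * (if i = j then h i b else 1))).symm
  rw [Fintype.piFinset_univ] at e2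
  rw [e2]
  have e3 : ∀ j : Fin n, (∑ b : Bool, (if b then p else 1 - p) * (if i = j then h i b else 1))
      = if i = j then p * h i true + (1 - p) * h i false else 1 := by
    intro j
    by_cases hij : i = j <;> simp [Fintype.sum_bool, hij] <;> ring
  simp_rw [e3]
  rw [Finset.prod_ite_eq]
  simp

lemma hybrid_exp {n : ℕ} (p : ℝ) (h : Fin n → Bool → ℝ) :
    ∑ c : Fin n → Bool, (∏ j, (if c j then p else 1 - p)) * (∑ i, h i (c i))
      = p * (∑ i, h i true) + (1 - p) * (∑ i, h i false) := by
  simp_rw [Finset.mul_sum]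
  rw [Finset.sum_comm]
  simp_rw [hybrid_key]
  rw [Finset.sum_add_distrib, ← Finset.mul_sum, ← Finset.mul_sum]

theorem hybrid_expected_point (n : ℕ) (e₁ e₂ : Fin n → ℝ) (p : ℝ)
    (hp0 : 0 ≤ p) (hp1 : p ≤ 1)
    (hsign : ∀ i, 0 < e₁ i ↔ 0 < e₂ i) :
    (∑ c : Fin n → Bool, (∏ i, (if c i then p else 1 - p)) *
        (∑ i ∈ univ.filter (fun i => 0 < (if c i then e₁ i else e₂ i)),
          (if c i then e₁ i else e₂ i)) =
      p * (∑ i ∈ univ.filter (fun i => 0 < e₁ i), e₁ i) +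
        (1 - p) * (∑ i ∈ univ.filter (fun i => 0 < e₂ i), e₂ i)) ∧
    (∑ c : Fin n → Bool, (∏ i, (if c i then p else 1 - p)) *
        (∑ i ∈ univ.filter (fun i => (if c i then e₁ i else e₂ i) ≤ 0),
          (if c i then e₁ i else e₂ i)) =
      p * (∑ i ∈ univ.filter (fun i => e₁ i ≤ 0), e₁ i) +
        (1 - p) * (∑ i ∈ univ.filter (fun i => e₂ i ≤ 0), e₂ i)) := by
  constructor
  · have := hybrid_exp (n := n) p
      (fun i b => if 0 < (if b then e₁ i else e₂ i) then (if b then e₁ i else e₂ i) else 0)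
    simp only [if_true, if_false] at this
    simp_rw [Finset.sum_filter]
    exact this
  · have := hybrid_exp (n := n) p
      (fun i b => if (if b then e₁ i else e₂ i) ≤ 0 then (if b then e₁ i else e₂ i) else 0)
    simp only [if_true, if_false] at this
    simp_rw [Finset.sum_filter]
    exact this
end
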